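/- Let G=(V,E) be a finite simple graph, ω: E → ℚ an edge-weight function, χ: V → {1,…,c} a c-coloring, and S ⊆ V. For v ∈ S and i ∈ {1,…,c} let θ_v^i := ω({{v,w} ∈ E : w ∈ N(v)\S, χ(w) ≠ i}). For S' ⊆ S and c' ∈ {1,…,c}, define T[S',c'] as the maximum, over all functions σ: S' → {1,…,c'}, of the total weight of those edges of E that have at least one endpoint in S' and no endpoint in S\S' and that are properly colored under the coloring equal to σ on S' and equal to χ on V\S. Then T[S',1] = Σ_{v ∈ S'} θ_v^1, and for every c' with 2 ≤ c' ≤ c, T[S',c'] = max_{S'' ⊆ S'} ( T[S'\S'', c'−1] + ω(E(S'', S'\S'')) + Σ_{v ∈ S''} θ_v^{c'} ), where E(S'', S'\S'') denotes the set of edges of G with one endpoint in S'' and the other endpoint in S'\S''. -/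
import Mathlib


open Finset
open scoped Classical

set_option maxHeartbeats 1000000

open Finset
open scoped Classical

section Helpers

variable {V : Type*} [Fintype V] [DecidableEq V]

private def crossP (χ : V → ℕ) (S A : Finset V) (k : ℕ) (e : Sym2 V) : Prop :=
  ∃ x ∈ e, ∃ y ∈ e, x ∈ A ∧ y ∉ S ∧ χ y ≠ k

private lemma sum_cross (G : SimpleGraph V) (ω : Sym2 V → ℚ) (χ : V → ℕ)
    (S A : Finset V) (hA : A ⊆ S) (k : ℕ) :
    ∑ e ∈ G.edgeFinset.filter (crossP χ S A k), ω e
      = ∑ v ∈ A, ∑ w ∈ (G.neighborFinset v).filter (fun w => w ∉ S ∧ χ w ≠ k), ω s(v, w) := by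
  rw [show (∑ v ∈ A, ∑ w ∈ (G.neighborFinset v).filter (fun w => w ∉ S ∧ χ w ≠ k), ω s(v, w))
      = ∑ p ∈ A.sigma (fun v => (G.neighborFinset v).filter (fun w => w ∉ S ∧ χ w ≠ k)),
          ω s(p.1, p.2) from (Finset.sum_sigma A _ (fun p : Σ _ : V, V => ω s(p.1, p.2))).symm]
  refine (Finset.sum_bij (fun (p : Σ _ : V, V) _ => s(p.1, p.2)) ?_ ?_ ?_ ?_).symm
  · rintro ⟨a, b⟩ hp
    rw [Finset.mem_sigma] at hp
    obtain ⟨ha, hb⟩ := hp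
    rw [Finset.mem_filter] at hb
    obtain ⟨hb1, hb2, hb3⟩ := hb
    rw [Finset.mem_filter]
    refine ⟨?_, a, ?_, b, ?_, ha, hb2, hb3⟩
    · simpa [SimpleGraph.mem_edgeFinset] using (SimpleGraph.mem_neighborFinset _ _ _).mp hb1
    · simp
    · simp
  · rintro ⟨a, b⟩ hp ⟨a', b'⟩ hp' h
    rw [Finset.mem_sigma, Finset.mem_filter] at hp hp'
    rw [Sym2.eq_iff] at h
    rcases h with ⟨rfl, rfl⟩ | ⟨rfl, rfl⟩
    · rfl
    · exact absurd (hA hp.1) hp'.2.2.1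
  · intro e he
    rw [Finset.mem_filter] at he
    obtain ⟨he1, x, hxe, y, hye, hx, hy, hk⟩ := he
    have hxy : x ≠ y := fun h => hy (h ▸ hA hx)
    have heq : e = s(x, y) := ((Sym2.mem_and_mem_iff hxy).mp ⟨hxe, hye⟩)
    have hadj : G.Adj x y := by
      rw [heq] at he1; simpa [SimpleGraph.mem_edgeFinset] using he1
    refine ⟨⟨x, y⟩, ?_, heq.symm⟩
    rw [Finset.mem_sigma, Finset.mem_filter]
    exact ⟨hx, (SimpleGraph.mem_neighborFinset _ _ _).mpr hadj, hy, hk⟩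
  · intro p hp
    rfl


private lemma base_val (G : SimpleGraph V) (ω : Sym2 V → ℚ) (χ : V → ℕ)
    (S : Finset V) (θ : V → ℕ → ℚ)
    (hθ : ∀ v i, θ v i =
      ∑ w ∈ (G.neighborFinset v).filter (fun w => w ∉ S ∧ χ w ≠ i), ω s(v, w))
    (S' : Finset V) (hS' : S' ⊆ S) (σ : V → ℕ) (hσ1 : ∀ v ∈ S', σ v = 1) :
    ∑ e ∈ G.edgeFinset.filter (fun e =>
        (∃ u ∈ e, u ∈ S') ∧ (∀ u ∈ e, u ∉ S \ S') ∧
        ¬ (Sym2.map (fun v => if v ∈ S' then σ v else χ v) e).IsDiag), ω e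
      = ∑ v ∈ S', θ v 1 := by
  rw [show (∑ v ∈ S', θ v 1)
      = ∑ e ∈ G.edgeFinset.filter (crossP χ S S' 1), ω e from by
    rw [sum_cross G ω χ S S' hS' 1]
    exact Finset.sum_congr rfl fun v _ => hθ v 1]
  rw [Finset.sum_filter, Finset.sum_filter]
  refine Finset.sum_congr rfl fun e he => ?_
  revert he
  induction e using Sym2.ind with
  | _ a b =>
    intro he
    have hadj : G.Adj a b := by simpa [SimpleGraph.mem_edgeFinset] using he
    have hne : a ≠ b := hadj.ne
    have h1 : a ∈ S' → a ∈ S := fun h => hS' h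
    have h2 : b ∈ S' → b ∈ S := fun h => hS' h
    have h3 : a ∈ S' → σ a = 1 := hσ1 a
    have h4 : b ∈ S' → σ b = 1 := hσ1 b
    by_cases ha1 : a ∈ S' <;> by_cases hb1 : b ∈ S' <;>
      by_cases ha0 : a ∈ S <;> by_cases hb0 : b ∈ S <;>
      simp_all [crossP, Sym2.mem_iff, Sym2.map_pair_eq, Sym2.mk_isDiag_iff,
        Finset.mem_sdiff, ne_comm]


private lemma ptwise (q : ℚ) (c' sa sb ka kb : ℕ)
    (A2 A1 A0 B2 B1 B0 : Prop)
    (h1 : A1 → A0) (h2 : B1 → B0) (h1' : A2 → A1) (h2' : B2 → B1)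
    (h3 : A2 → sa = c') (h4 : B2 → sb = c')
    (h5 : A1 → ¬A2 → sa ≠ c') (h6 : B1 → ¬B2 → sb ≠ c') :
    (if (A1 ∨ B1) ∧ (¬(A0 ∧ ¬A1) ∧ ¬(B0 ∧ ¬B1)) ∧
        ¬(if A1 then sa else ka) = if B1 then sb else kb then q else 0) =
    ((if (A1 ∧ ¬A2 ∨ B1 ∧ ¬B2) ∧ (¬(A0 ∧ ¬(A1 ∧ ¬A2)) ∧ ¬(B0 ∧ ¬(B1 ∧ ¬B2))) ∧
        ¬(if A1 ∧ ¬A2 then sa else ka) = if B1 ∧ ¬B2 then sb else kb then q else 0) +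
      (if (A2 ∨ B2) ∧ (A1 ∧ ¬A2 ∨ B1 ∧ ¬B2) then q else 0)) +
    (if (A2 ∧ ¬A0 ∧ ka ≠ c' ∨ A2 ∧ ¬B0 ∧ kb ≠ c') ∨
        (B2 ∧ ¬A0 ∧ ka ≠ c' ∨ B2 ∧ ¬B0 ∧ kb ≠ c') then q else 0) := by
  by_cases hA2 : A2 <;> by_cases hB2 : B2 <;> by_cases hA1 : A1 <;> by_cases hB1 : B1 <;>
    by_cases hA0 : A0 <;> by_cases hB0 : B0 <;>
    (try simp_all) <;> (try split_ifs) <;> first | rfl | (intros; exfalso; omega)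

private lemma split_val (G : SimpleGraph V) (ω : Sym2 V → ℚ) (χ : V → ℕ)
    (S : Finset V) (θ : V → ℕ → ℚ)
    (hθ : ∀ v i, θ v i =
      ∑ w ∈ (G.neighborFinset v).filter (fun w => w ∉ S ∧ χ w ≠ i), ω s(v, w))
    (S' : Finset V) (hS' : S' ⊆ S) (c' : ℕ)
    (σ : V → ℕ)
    (S'' : Finset V) (hS''sub : S'' ⊆ S')
    (hall : ∀ v ∈ S'', σ v = c') (hnone : ∀ v ∈ S' \ S'', σ v ≠ c') :
    ∑ e ∈ G.edgeFinset.filter (fun e =>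
        (∃ u ∈ e, u ∈ S') ∧ (∀ u ∈ e, u ∉ S \ S') ∧
        ¬ (Sym2.map (fun v => if v ∈ S' then σ v else χ v) e).IsDiag), ω e
    = (∑ e ∈ G.edgeFinset.filter (fun e =>
        (∃ u ∈ e, u ∈ S' \ S'') ∧ (∀ u ∈ e, u ∉ S \ (S' \ S'')) ∧
        ¬ (Sym2.map (fun v => if v ∈ S' \ S'' then σ v else χ v) e).IsDiag), ω e)
      + (∑ e ∈ G.edgeFinset.filter (fun e =>
          (∃ x ∈ e, x ∈ S'') ∧ (∃ y ∈ e, y ∈ S' \ S'')), ω e)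
      + ∑ v ∈ S'', θ v c' := by
  rw [show (∑ v ∈ S'', θ v c')
      = ∑ e ∈ G.edgeFinset.filter (crossP χ S S'' c'), ω e from by
    rw [sum_cross G ω χ S S'' (hS''sub.trans hS') c']
    exact Finset.sum_congr rfl fun v _ => hθ v c']
  rw [Finset.sum_filter, Finset.sum_filter, Finset.sum_filter, Finset.sum_filter,
    ← Finset.sum_add_distrib, ← Finset.sum_add_distrib]
  refine Finset.sum_congr rfl fun e he => ?_
  revert he
  induction e using Sym2.ind with
  | _ a b =>
    intro he
    have hadj : G.Adj a b := by simpa [SimpleGraph.mem_edgeFinset] using he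
    have hne : a ≠ b := hadj.ne
    have h1 : a ∈ S' → a ∈ S := fun h => hS' h
    have h2 : b ∈ S' → b ∈ S := fun h => hS' h
    have h1' : a ∈ S'' → a ∈ S' := fun h => hS''sub h
    have h2' : b ∈ S'' → b ∈ S' := fun h => hS''sub h
    have h3 : a ∈ S'' → σ a = c' := hall a
    have h4 : b ∈ S'' → σ b = c' := hall b
    have h5 : a ∈ S' → a ∉ S'' → σ a ≠ c' := fun h h' => hnone a (Finset.mem_sdiff.mpr ⟨h, h'⟩)
    have h6 : b ∈ S' → b ∉ S'' → σ b ≠ c' := fun h h' => hnone b (Finset.mem_sdiff.mpr ⟨h, h'⟩)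
    simp only [crossP, Sym2.mem_iff, Sym2.map_pair_eq, Sym2.mk_isDiag_iff, Finset.mem_sdiff,
      forall_eq_or_imp, forall_eq, exists_eq_or_imp, exists_eq_left]
    have hpt := ptwise (ω s(a, b)) c' (σ a) (σ b) (χ a) (χ b)
      (a ∈ S'') (a ∈ S') (a ∈ S) (b ∈ S'') (b ∈ S') (b ∈ S)
      h1 h2 h1' h2' h3 h4 h5 h6
    convert hpt using 2 <;> congr!

end Helpers


/-- Recurrence of the dynamic program computing, for each `S' ⊆ S` and each
number of colors `c' ∈ [1,c]`, the maximum total weight `T[S',c']` of edges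
with at least one endpoint in `S'` and no endpoint in `S \ S'` that are
properly colored when the vertices of `S'` are recolored with colors from
`[1,c']` (and all vertices outside `S` keep their color under `χ`). -/
theorem dp_recurrence
    {V : Type*} [Fintype V] [DecidableEq V]
    (G : SimpleGraph V) (ω : Sym2 V → ℚ)
    (c : ℕ) (hc : 1 ≤ c) (χ : V → ℕ) (hχ : ∀ v, χ v ∈ Finset.Icc 1 c)
    (S : Finset V)
    (θ : V → ℕ → ℚ)
    (hθ : ∀ v i, θ v i =
      ∑ w ∈ (G.neighborFinset v).filter (fun w => w ∉ S ∧ χ w ≠ i), ω s(v, w))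
    (T : Finset V → ℕ → ℚ)
    (hT : ∀ S' ⊆ S, ∀ c' ∈ Finset.Icc 1 c,
      IsGreatest
        {x : ℚ | ∃ σ : V → ℕ, (∀ v ∈ S', σ v ∈ Finset.Icc 1 c') ∧
          x = ∑ e ∈ G.edgeFinset.filter (fun e =>
              (∃ u ∈ e, u ∈ S') ∧ (∀ u ∈ e, u ∉ S \ S') ∧
              ¬ (Sym2.map (fun v => if v ∈ S' then σ v else χ v) e).IsDiag), ω e}
        (T S' c')) :
    (∀ S' ⊆ S, T S' 1 = ∑ v ∈ S', θ v 1) ∧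
    (∀ S' ⊆ S, ∀ c', 2 ≤ c' → c' ≤ c →
      T S' c' = S'.powerset.sup' (Finset.powerset_nonempty S')
        (fun S'' =>
          T (S' \ S'') (c' - 1) +
          (∑ e ∈ G.edgeFinset.filter (fun e =>
              (∃ x ∈ e, x ∈ S'') ∧ (∃ y ∈ e, y ∈ S' \ S'')), ω e) +
          ∑ v ∈ S'', θ v c')) := by
  constructor
  · intro S' hS'
    obtain ⟨⟨σ, hσ, hval⟩, -⟩ := hT S' hS' 1 (Finset.mem_Icc.mpr ⟨le_rfl, hc⟩)
    have hσ1 : ∀ v ∈ S', σ v = 1 := fun v hv => by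
      have := Finset.mem_Icc.mp (hσ v hv); omega
    rw [hval]
    exact base_val G ω χ S θ hθ S' hS' σ hσ1
  · intro S' hS' c' hc2 hcc
    have hc'mem : c' ∈ Finset.Icc 1 c := Finset.mem_Icc.mpr ⟨by omega, hcc⟩
    have hc1mem : c' - 1 ∈ Finset.Icc 1 c := Finset.mem_Icc.mpr ⟨by omega, by omega⟩
    obtain ⟨⟨σ, hσ, hval⟩, hub⟩ := hT S' hS' c' hc'mem
    apply le_antisymm
    · -- T S' c' ≤ sup'
      set S'' : Finset V := S'.filter (fun v => σ v = c') with hS''def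
      have hS''sub : S'' ⊆ S' := Finset.filter_subset _ _
      have hall : ∀ v ∈ S'', σ v = c' := fun v hv => (Finset.mem_filter.mp hv).2
      have hnone : ∀ v ∈ S' \ S'', σ v ≠ c' := fun v hv => by
        have h := Finset.mem_sdiff.mp hv
        intro hcon
        exact h.2 (Finset.mem_filter.mpr ⟨h.1, hcon⟩)
      have key := split_val G ω χ S θ hθ S' hS' c' σ S'' hS''sub hall hnone
      rw [hval, key]
      refine le_trans ?_ (Finset.le_sup' _ (Finset.mem_powerset.mpr hS''sub))
      have hsub := hT (S' \ S'') (Finset.sdiff_subset.trans hS') (c' - 1) hc1mem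
      have hmem : (∑ e ∈ G.edgeFinset.filter (fun e =>
            (∃ u ∈ e, u ∈ S' \ S'') ∧ (∀ u ∈ e, u ∉ S \ (S' \ S'')) ∧
            ¬ (Sym2.map (fun v => if v ∈ S' \ S'' then σ v else χ v) e).IsDiag), ω e)
          ∈ {x : ℚ | ∃ σ₂ : V → ℕ, (∀ v ∈ S' \ S'', σ₂ v ∈ Finset.Icc 1 (c' - 1)) ∧
            x = ∑ e ∈ G.edgeFinset.filter (fun e =>
                (∃ u ∈ e, u ∈ S' \ S'') ∧ (∀ u ∈ e, u ∉ S \ (S' \ S'')) ∧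
                ¬ (Sym2.map (fun v => if v ∈ S' \ S'' then σ₂ v else χ v) e).IsDiag), ω e} := by
        refine ⟨σ, fun v hv => ?_, rfl⟩
        have h := Finset.mem_sdiff.mp hv
        have hb := Finset.mem_Icc.mp (hσ v h.1)
        have hne := hnone v hv
        exact Finset.mem_Icc.mpr ⟨hb.1, by omega⟩
      have hle := hsub.2 hmem
      gcongr
    · -- sup' ≤ T S' c'
      refine Finset.sup'_le _ _ ?_
      intro S'' hS''
      rw [Finset.mem_powerset] at hS''
      obtain ⟨⟨σ', hσ', hval'⟩, -⟩ := hT (S' \ S'') (Finset.sdiff_subset.trans hS') (c' - 1) hc1mem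
      set σ₀ : V → ℕ := fun v => if v ∈ S'' then c' else σ' v with hσ₀def
      have hall : ∀ v ∈ S'', σ₀ v = c' := fun v hv => by simp [hσ₀def, hv]
      have hnone : ∀ v ∈ S' \ S'', σ₀ v ≠ c' := fun v hv => by
        have h := Finset.mem_sdiff.mp hv
        have hb := Finset.mem_Icc.mp (hσ' v hv)
        simp only [hσ₀def, if_neg h.2]
        omega
      have key := split_val G ω χ S θ hθ S' hS' c' σ₀ S'' hS'' hall hnone
      have hfun : (fun v => if v ∈ S' \ S'' then σ₀ v else χ v)
          = (fun v => if v ∈ S' \ S'' then σ' v else χ v) := by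
        funext v
        by_cases hv : v ∈ S' \ S''
        · simp only [if_pos hv, hσ₀def, if_neg (Finset.mem_sdiff.mp hv).2]
        · simp only [if_neg hv]
      rw [hfun] at key
      have hmem : (∑ e ∈ G.edgeFinset.filter (fun e =>
            (∃ u ∈ e, u ∈ S') ∧ (∀ u ∈ e, u ∉ S \ S') ∧
            ¬ (Sym2.map (fun v => if v ∈ S' then σ₀ v else χ v) e).IsDiag), ω e)
          ∈ {x : ℚ | ∃ σ₂ : V → ℕ, (∀ v ∈ S', σ₂ v ∈ Finset.Icc 1 c') ∧
            x = ∑ e ∈ G.edgeFinset.filter (fun e =>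
                (∃ u ∈ e, u ∈ S') ∧ (∀ u ∈ e, u ∉ S \ S') ∧
                ¬ (Sym2.map (fun v => if v ∈ S' then σ₂ v else χ v) e).IsDiag), ω e} := by
        refine ⟨σ₀, fun v hv => ?_, rfl⟩
        by_cases hv2 : v ∈ S''
        · simp only [hσ₀def, if_pos hv2]
          exact Finset.mem_Icc.mpr ⟨by omega, le_rfl⟩
        · have hb := Finset.mem_Icc.mp (hσ' v (Finset.mem_sdiff.mpr ⟨hv, hv2⟩))
          simp only [hσ₀def, if_neg hv2]
          exact Finset.mem_Icc.mpr ⟨hb.1, by omega⟩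
      have := hub hmem
      calc T (S' \ S'') (c' - 1) +
          (∑ e ∈ G.edgeFinset.filter (fun e =>
              (∃ x ∈ e, x ∈ S'') ∧ (∃ y ∈ e, y ∈ S' \ S'')), ω e) +
          ∑ v ∈ S'', θ v c'
          = ∑ e ∈ G.edgeFinset.filter (fun e =>
              (∃ u ∈ e, u ∈ S') ∧ (∀ u ∈ e, u ∉ S \ S') ∧
              ¬ (Sym2.map (fun v => if v ∈ S' then σ₀ v else χ v) e).IsDiag), ω e := by
            rw [key, hval']
        _ ≤ T S' c' := this
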